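/- Let λ₁,λ₂,λ₃,λ₄ and λ̄₁,λ̄₂,λ̄₃,λ̄₄ be positive reals and let a,b,c,d be real numbers. Suppose A,B,C,D : [0,∞) → (0,∞) are differentiable and satisfy dA/dt = B/D, dB/dt = -B²/(AD), dC/dt = 0, dD/dt = 3 + B/A with A(0)=λ₁, B(0)=λ₂, C(0)=λ₃, D(0)=λ₄, with A(t) → ∞ and D(t) → ∞ as t → ∞; let Ā,B̄,C̄,D̄ satisfy the same ODE system with initial data λ̄₁,λ̄₂,λ̄₃,λ̄₄ and with Ā(t) → ∞, D̄(t) → ∞. Then the quantity ((A-Ā-a²B̄)/A)² + ((B-B̄)/B)² + ((C-C̄)/C)² + ((b²Ā+c²B̄+d²C̄+D̄-D)/D)² + 2(aB̄)²/(AB) + 2(bĀ+acB̄)²/(AD) + 2(cB̄)²/(BD) + 2(dC̄)²/(CD) tends to 0 as t → ∞ if and only if λ̄₁λ̄₂ = λ₁λ₂ and λ̄₃ = λ₃ (with λ̄₄ arbitrary), for every choice of a,b,c,d; in particular the quasi-convergence class [g] is exactly a 2-parameter family. -/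

import Mathlib

open Filter Set Topology

lemma aux_const {f : ℝ → ℝ} (hf : ∀ t ∈ Set.Ici (0:ℝ), HasDerivWithinAt f 0 (Set.Ici 0) t) :
    ∀ t ∈ Set.Ici (0:ℝ), f t = f 0 := by
  intro t ht
  have hc : ContinuousOn f (Set.Icc 0 t) := fun x hx =>
    ((hf x hx.1).continuousWithinAt).mono (Set.Icc_subset_Ici_self)
  have hd : ∀ x ∈ Set.Ico (0:ℝ) t, HasDerivWithinAt f 0 (Set.Ici x) x := fun x hx =>
    (hf x hx.1).mono (Set.Ici_subset_Ici.2 hx.1)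
  exact constant_of_has_deriv_right_zero hc hd t (Set.right_mem_Icc.2 ht)

lemma lhop_aux {f g f' g' : ℝ → ℝ} {T₀ L : ℝ}
    (hf : ∀ t ∈ Set.Ici T₀, HasDerivWithinAt f (f' t) (Set.Ici T₀) t)
    (hg : ∀ t ∈ Set.Ici T₀, HasDerivWithinAt g (g' t) (Set.Ici T₀) t)
    (hg'pos : ∀ t ∈ Set.Ici T₀, 0 < g' t)
    (hgtop : Tendsto g atTop atTop)
    (hratio : Tendsto (fun t => f' t / g' t) atTop (nhds L)) :
    Tendsto (fun t => f t / g t) atTop (nhds L) := by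
  rw [Metric.tendsto_atTop]
  intro ε hε
  have hε3 : 0 < ε / 3 := by linarith
  obtain ⟨T₁, hT₁⟩ := Metric.tendsto_atTop.1 hratio (ε / 3) hε3
  set T := max T₀ T₁ with hTdef
  have hTT₀ : T₀ ≤ T := le_max_left _ _
  have hsub : Set.Ici T ⊆ Set.Ici T₀ := Set.Ici_subset_Ici.2 hTT₀
  have hsub' : Set.Ioi T ⊆ Set.Ici T₀ := fun x hx => le_trans hTT₀ (le_of_lt hx)
  have hcg : ContinuousOn g (Set.Ici T) := fun x hx =>
    ((hg x (hsub hx)).continuousWithinAt).mono hsub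
  have hcf : ContinuousOn f (Set.Ici T) := fun x hx =>
    ((hf x (hsub hx)).continuousWithinAt).mono hsub
  have hbound : ∀ x ∈ Set.Ioi T, |f' x / g' x - L| < ε / 3 := by
    intro x hx
    have := hT₁ x (le_of_lt (lt_of_le_of_lt (le_max_right T₀ T₁) hx))
    rwa [Real.dist_eq] at this
  -- upper estimate
  have hup : ∀ t, T ≤ t → f t - f T ≤ (L + ε / 3) * (g t - g T) := by
    intro t ht
    have hmono : MonotoneOn (fun x => (L + ε / 3) * g x - f x) (Set.Ici T) := by
      apply monotoneOn_of_hasDerivWithinAt_nonneg (convex_Ici T)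
        ((continuousOn_const.mul hcg).sub hcf)
        (f' := fun x => (L + ε / 3) * g' x - f' x)
      · intro x hx
        rw [interior_Ici] at hx ⊢
        exact (((hg x (hsub' hx)).mono hsub').const_mul _).sub ((hf x (hsub' hx)).mono hsub')
      · intro x hx
        rw [interior_Ici] at hx
        have h1 := (abs_lt.1 (hbound x hx)).2
        have h2 := hg'pos x (hsub' hx)
        have h3 : f' x < (L + ε / 3) * g' x := by
          have h1' : f' x / g' x < L + ε / 3 := by linarith
          rw [div_lt_iff₀ h2] at h1'
          linarith
        linarith
    have := hmono (Set.self_mem_Ici) (Set.mem_Ici.2 ht) ht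
    simp only at this
    nlinarith
  have hlo : ∀ t, T ≤ t → (L - ε / 3) * (g t - g T) ≤ f t - f T := by
    intro t ht
    have hmono : MonotoneOn (fun x => f x - (L - ε / 3) * g x) (Set.Ici T) := by
      apply monotoneOn_of_hasDerivWithinAt_nonneg (convex_Ici T)
        (hcf.sub (continuousOn_const.mul hcg))
        (f' := fun x => f' x - (L - ε / 3) * g' x)
      · intro x hx
        rw [interior_Ici] at hx ⊢
        exact ((hf x (hsub' hx)).mono hsub').sub (((hg x (hsub' hx)).mono hsub').const_mul _)
      · intro x hx
        rw [interior_Ici] at hx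
        have h1 := (abs_lt.1 (hbound x hx)).1
        have h2 := hg'pos x (hsub' hx)
        have h3 : (L - ε / 3) * g' x < f' x := by
          have h1' : L - ε / 3 < f' x / g' x := by linarith
          rw [lt_div_iff₀ h2] at h1'
          linarith
        linarith
    have := hmono (Set.self_mem_Ici) (Set.mem_Ici.2 ht) ht
    simp only at this
    nlinarith
  obtain ⟨K, hK0, habs⟩ : ∃ K, 0 ≤ K ∧ ∀ t, T ≤ t → |f t - L * g t| ≤ ε / 3 * g t + K := by
    refine ⟨|f T - (L + ε / 3) * g T| + |f T - (L - ε / 3) * g T|, by positivity, ?_⟩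
    intro t ht
    have h1 := hup t ht
    have h2 := hlo t ht
    have h3 : f T - (L + ε / 3) * g T ≤ |f T - (L + ε / 3) * g T| := le_abs_self _
    have h4 : -|f T - (L - ε / 3) * g T| ≤ f T - (L - ε / 3) * g T := neg_abs_le _
    rw [abs_le]
    constructor <;> nlinarith [abs_nonneg (f T - (L + ε / 3) * g T),
      abs_nonneg (f T - (L - ε / 3) * g T)]
  obtain ⟨T₂, hT₂⟩ := eventually_atTop.1 (tendsto_atTop.1 hgtop (max 1 (3 * K / ε)))
  refine ⟨max T T₂, fun t ht => ?_⟩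
  have ht1 : T ≤ t := le_trans (le_max_left _ _) ht
  have hgt := hT₂ t (le_trans (le_max_right _ _) ht)
  have hg1 : (1:ℝ) ≤ g t := le_trans (le_max_left _ _) hgt
  have hgK' : 3 * K / ε ≤ g t := le_trans (le_max_right _ _) hgt
  have hgpos : 0 < g t := lt_of_lt_of_le one_pos hg1
  have hKg : K ≤ ε / 3 * g t := by
    rw [div_le_iff₀ hε] at hgK'
    nlinarith
  rw [Real.dist_eq, div_sub' (ne_of_gt hgpos), abs_div, abs_of_pos hgpos,
    div_lt_iff₀ hgpos]
  have h1 := habs t ht1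
  have h2 : |f t - g t * L| = |f t - L * g t| := by ring_nf
  rw [h2]
  nlinarith [mul_pos hε hgpos, mul_pos hε3 hgpos]
open Filter Set Topology

set_option maxHeartbeats 2000000 in
/-- class A5, different frames: quasi-convergence holds iff
`λ̄₁λ̄₂ = λ₁λ₂` and `λ̄₃ = λ₃`, for every choice of `a,b,c,d`;
`[g]` is a 2-parameter family. -/
theorem stmt_6 (l1 l2 l3 l4 m1 m2 m3 m4 a b c d : ℝ)
    (hl1 : 0 < l1) (hl2 : 0 < l2) (hl3 : 0 < l3) (hl4 : 0 < l4)
    (hm1 : 0 < m1) (hm2 : 0 < m2) (hm3 : 0 < m3) (hm4 : 0 < m4)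
    (A B C D Ab Bb Cb Db : ℝ → ℝ)
    (hApos : ∀ t ∈ Set.Ici (0:ℝ), 0 < A t) (hBpos : ∀ t ∈ Set.Ici (0:ℝ), 0 < B t)
    (hCpos : ∀ t ∈ Set.Ici (0:ℝ), 0 < C t) (hDpos : ∀ t ∈ Set.Ici (0:ℝ), 0 < D t)
    (hAbpos : ∀ t ∈ Set.Ici (0:ℝ), 0 < Ab t) (hBbpos : ∀ t ∈ Set.Ici (0:ℝ), 0 < Bb t)
    (hCbpos : ∀ t ∈ Set.Ici (0:ℝ), 0 < Cb t) (hDbpos : ∀ t ∈ Set.Ici (0:ℝ), 0 < Db t)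
    (hA : ∀ t ∈ Set.Ici (0:ℝ), HasDerivWithinAt A (B t / D t) (Set.Ici 0) t)
    (hB : ∀ t ∈ Set.Ici (0:ℝ),
      HasDerivWithinAt B (-(B t) ^ 2 / (A t * D t)) (Set.Ici 0) t)
    (hC : ∀ t ∈ Set.Ici (0:ℝ), HasDerivWithinAt C 0 (Set.Ici 0) t)
    (hD : ∀ t ∈ Set.Ici (0:ℝ), HasDerivWithinAt D (3 + B t / A t) (Set.Ici 0) t)
    (hA0 : A 0 = l1) (hB0 : B 0 = l2) (hC0 : C 0 = l3) (hD0 : D 0 = l4)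
    (hAlim : Filter.Tendsto A Filter.atTop Filter.atTop)
    (hDlim : Filter.Tendsto D Filter.atTop Filter.atTop)
    (hAb : ∀ t ∈ Set.Ici (0:ℝ), HasDerivWithinAt Ab (Bb t / Db t) (Set.Ici 0) t)
    (hBb : ∀ t ∈ Set.Ici (0:ℝ),
      HasDerivWithinAt Bb (-(Bb t) ^ 2 / (Ab t * Db t)) (Set.Ici 0) t)
    (hCb : ∀ t ∈ Set.Ici (0:ℝ), HasDerivWithinAt Cb 0 (Set.Ici 0) t)
    (hDb : ∀ t ∈ Set.Ici (0:ℝ), HasDerivWithinAt Db (3 + Bb t / Ab t) (Set.Ici 0) t)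
    (hAb0 : Ab 0 = m1) (hBb0 : Bb 0 = m2) (hCb0 : Cb 0 = m3) (hDb0 : Db 0 = m4)
    (hAblim : Filter.Tendsto Ab Filter.atTop Filter.atTop)
    (hDblim : Filter.Tendsto Db Filter.atTop Filter.atTop) :
    Filter.Tendsto (fun t : ℝ =>
        ((A t - Ab t - a ^ 2 * Bb t) / A t) ^ 2 +
        ((B t - Bb t) / B t) ^ 2 +
        ((C t - Cb t) / C t) ^ 2 +
        ((b ^ 2 * Ab t + c ^ 2 * Bb t + d ^ 2 * Cb t + Db t - D t) / D t) ^ 2 +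
        2 * (a * Bb t) ^ 2 / (A t * B t) +
        2 * (b * Ab t + a * c * Bb t) ^ 2 / (A t * D t) +
        2 * (c * Bb t) ^ 2 / (B t * D t) +
        2 * (d * Cb t) ^ 2 / (C t * D t))
      Filter.atTop (nhds 0) ↔ (m1 * m2 = l1 * l2 ∧ m3 = l3) := by
  -- conserved quantities
  have hconsAB : ∀ t ∈ Set.Ici (0:ℝ), A t * B t = l1 * l2 := by
    have h := aux_const (f := fun t => A t * B t) (by
      intro t ht
      have h1 := (hA t ht).mul (hB t ht)
      have hA' : A t ≠ 0 := (hApos t ht).ne'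
      have hD' : D t ≠ 0 := (hDpos t ht).ne'
      have e : B t / D t * B t + A t * (-(B t) ^ 2 / (A t * D t)) = 0 := by
        field_simp
        ring
      rwa [e] at h1)
    intro t ht
    simpa [hA0, hB0] using h t ht
  have hconsAbBb : ∀ t ∈ Set.Ici (0:ℝ), Ab t * Bb t = m1 * m2 := by
    have h := aux_const (f := fun t => Ab t * Bb t) (by
      intro t ht
      have h1 := (hAb t ht).mul (hBb t ht)
      have hA' : Ab t ≠ 0 := (hAbpos t ht).ne'
      have hD' : Db t ≠ 0 := (hDbpos t ht).ne'
      have e : Bb t / Db t * Bb t + Ab t * (-(Bb t) ^ 2 / (Ab t * Db t)) = 0 := by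
        field_simp
        ring
      rwa [e] at h1)
    intro t ht
    simpa [hAb0, hBb0] using h t ht
  have hCconst : ∀ t ∈ Set.Ici (0:ℝ), C t = l3 := by
    intro t ht; rw [aux_const hC t ht, hC0]
  have hCbconst : ∀ t ∈ Set.Ici (0:ℝ), Cb t = m3 := by
    intro t ht; rw [aux_const hCb t ht, hCb0]
  -- B and Bb in terms of A, Ab
  have hBeq : ∀ t ∈ Set.Ici (0:ℝ), B t = l1 * l2 / A t := by
    intro t ht
    rw [eq_div_iff (hApos t ht).ne']
    rw [mul_comm]; exact hconsAB t ht
  have hBbeq : ∀ t ∈ Set.Ici (0:ℝ), Bb t = m1 * m2 / Ab t := by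
    intro t ht
    rw [eq_div_iff (hAbpos t ht).ne']
    rw [mul_comm]; exact hconsAbBb t ht
  -- limits of B, Bb
  have hBlim : Tendsto B atTop (nhds 0) := by
    have h : Tendsto (fun t => l1 * l2 / A t) atTop (nhds 0) :=
      Tendsto.div_atTop tendsto_const_nhds hAlim
    apply h.congr'
    filter_upwards [eventually_ge_atTop (0:ℝ)] with t ht
    rw [hBeq t ht]
  have hBblim : Tendsto Bb atTop (nhds 0) := by
    have h : Tendsto (fun t => m1 * m2 / Ab t) atTop (nhds 0) :=
      Tendsto.div_atTop tendsto_const_nhds hAblim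
    apply h.congr'
    filter_upwards [eventually_ge_atTop (0:ℝ)] with t ht
    rw [hBbeq t ht]
  have hinvA : Tendsto (fun t => (A t)⁻¹) atTop (nhds 0) := tendsto_inv_atTop_zero.comp hAlim
  have hinvAb : Tendsto (fun t => (Ab t)⁻¹) atTop (nhds 0) := tendsto_inv_atTop_zero.comp hAblim
  have hinvD : Tendsto (fun t => (D t)⁻¹) atTop (nhds 0) := tendsto_inv_atTop_zero.comp hDlim
  have hBA : Tendsto (fun t => B t / A t) atTop (nhds 0) := by
    have h := hBlim.mul hinvA
    simp only [mul_zero] at h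
    simpa [div_eq_mul_inv] using h
  have hBbAb : Tendsto (fun t => Bb t / Ab t) atTop (nhds 0) := by
    have h := hBblim.mul hinvAb
    simp only [mul_zero] at h
    simpa [div_eq_mul_inv] using h
  have hBbA : Tendsto (fun t => Bb t / A t) atTop (nhds 0) := by
    have h := hBblim.mul hinvA
    simp only [mul_zero] at h
    simpa [div_eq_mul_inv] using h
  have hBbD : Tendsto (fun t => Bb t / D t) atTop (nhds 0) := by
    have h := hBblim.mul hinvD
    simp only [mul_zero] at h
    simpa [div_eq_mul_inv] using h
  have hBD : Tendsto (fun t => B t / D t) atTop (nhds 0) := by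
    have h := hBlim.mul hinvD
    simp only [mul_zero] at h
    simpa [div_eq_mul_inv] using h
  -- D / t → 3
  have hD3 : Tendsto (fun t => D t / t) atTop (nhds 3) := by
    apply lhop_aux (T₀ := 0) (f' := fun t => 3 + B t / A t) (g' := fun _ => (1:ℝ)) hD
      (fun t _ => hasDerivWithinAt_id t _) (fun t _ => one_pos) tendsto_id
    have h : Tendsto (fun t => 3 + B t / A t) atTop (nhds (3 + 0)) :=
      tendsto_const_nhds.add hBA
    simpa using h
  have hDb3 : Tendsto (fun t => Db t / t) atTop (nhds 3) := by
    apply lhop_aux (T₀ := 0) (f' := fun t => 3 + Bb t / Ab t) (g' := fun _ => (1:ℝ)) hDb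
      (fun t _ => hasDerivWithinAt_id t _) (fun t _ => one_pos) tendsto_id
    have h : Tendsto (fun t => 3 + Bb t / Ab t) atTop (nhds (3 + 0)) :=
      tendsto_const_nhds.add hBbAb
    simpa using h
  have htD : Tendsto (fun t => t / D t) atTop (nhds 3⁻¹) := by
    have h := hD3.inv₀ (by norm_num : (3:ℝ) ≠ 0)
    simpa [inv_div] using h
  have htDb : Tendsto (fun t => t / Db t) atTop (nhds 3⁻¹) := by
    have h := hDb3.inv₀ (by norm_num : (3:ℝ) ≠ 0)
    simpa [inv_div] using h
  -- A^2 / log t → 2 l1 l2 / 3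
  have hA2log : Tendsto (fun t => (A t) ^ 2 / Real.log t) atTop (nhds (2 * l1 * l2 * 3⁻¹)) := by
    apply lhop_aux (T₀ := 1) (f' := fun t => 2 * A t * (B t / D t)) (g' := fun t => t⁻¹)
    · intro t ht
      have ht0 : t ∈ Set.Ici (0:ℝ) := Set.mem_Ici.2 (le_trans zero_le_one (Set.mem_Ici.1 ht))
      have h1 := ((hA t ht0).pow 2).mono (Set.Ici_subset_Ici.2 (zero_le_one))
      norm_num at h1
      exact h1
    · intro t ht
      have htpos : (0:ℝ) < t := lt_of_lt_of_le one_pos ht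
      exact (Real.hasDerivAt_log htpos.ne').hasDerivWithinAt
    · intro t ht
      exact inv_pos.2 (lt_of_lt_of_le one_pos ht)
    · exact Real.tendsto_log_atTop
    · have h : Tendsto (fun t => 2 * l1 * l2 * (t / D t)) atTop (nhds (2 * l1 * l2 * 3⁻¹)) :=
        tendsto_const_nhds.mul htD
      apply h.congr'
      filter_upwards [eventually_ge_atTop (1:ℝ)] with t ht
      have ht0 : t ∈ Set.Ici (0:ℝ) := le_trans zero_le_one ht
      have htne : t ≠ 0 := (lt_of_lt_of_le one_pos ht).ne'
      have hDne : D t ≠ 0 := (hDpos t ht0).ne'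
      have hAB := hconsAB t ht0
      rw [div_inv_eq_mul]
      linear_combination (-2 * t / D t) * hAB
  have hAb2log : Tendsto (fun t => (Ab t) ^ 2 / Real.log t) atTop (nhds (2 * m1 * m2 * 3⁻¹)) := by
    apply lhop_aux (T₀ := 1) (f' := fun t => 2 * Ab t * (Bb t / Db t)) (g' := fun t => t⁻¹)
    · intro t ht
      have ht0 : t ∈ Set.Ici (0:ℝ) := Set.mem_Ici.2 (le_trans zero_le_one (Set.mem_Ici.1 ht))
      have h1 := ((hAb t ht0).pow 2).mono (Set.Ici_subset_Ici.2 (zero_le_one))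
      norm_num at h1
      exact h1
    · intro t ht
      have htpos : (0:ℝ) < t := lt_of_lt_of_le one_pos ht
      exact (Real.hasDerivAt_log htpos.ne').hasDerivWithinAt
    · intro t ht
      exact inv_pos.2 (lt_of_lt_of_le one_pos ht)
    · exact Real.tendsto_log_atTop
    · have h : Tendsto (fun t => 2 * m1 * m2 * (t / Db t)) atTop (nhds (2 * m1 * m2 * 3⁻¹)) :=
        tendsto_const_nhds.mul htDb
      apply h.congr'
      filter_upwards [eventually_ge_atTop (1:ℝ)] with t ht
      have ht0 : t ∈ Set.Ici (0:ℝ) := le_trans zero_le_one ht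
      have htne : t ≠ 0 := (lt_of_lt_of_le one_pos ht).ne'
      have hDne : Db t ≠ 0 := (hDbpos t ht0).ne'
      have hAB := hconsAbBb t ht0
      rw [div_inv_eq_mul]
      linear_combination (-2 * t / Db t) * hAB
  -- ratio Ab^2/A^2
  have hlogpos : ∀ᶠ t in atTop, 0 < Real.log t := by
    filter_upwards [eventually_ge_atTop (2:ℝ)] with t ht
    exact Real.log_pos (by linarith)
  have hratio2 : Tendsto (fun t => (Ab t) ^ 2 / (A t) ^ 2) atTop
      (nhds (m1 * m2 / (l1 * l2))) := by
    have h := hAb2log.div hA2log (by positivity : (2 * l1 * l2 * 3⁻¹ : ℝ) ≠ 0)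
    have e : (2 * m1 * m2 * 3⁻¹) / (2 * l1 * l2 * 3⁻¹) = m1 * m2 / (l1 * l2) := by
      rw [div_eq_div_iff (by positivity) (by positivity)]
      ring
    rw [e] at h
    apply h.congr'
    filter_upwards [hlogpos] with t ht
    show (Ab t) ^ 2 / Real.log t / ((A t) ^ 2 / Real.log t) = (Ab t) ^ 2 / (A t) ^ 2
    rw [div_div_div_comm, div_self ht.ne', div_one]
  set r : ℝ := Real.sqrt (m1 * m2 / (l1 * l2)) with hrdef
  have hrpos : 0 < r := Real.sqrt_pos.2 (by positivity)
  have hr2 : r ^ 2 = m1 * m2 / (l1 * l2) := Real.sq_sqrt (by positivity)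
  have hr : Tendsto (fun t => Ab t / A t) atTop (nhds r) := by
    have h := (Real.continuous_sqrt.tendsto _).comp hratio2
    apply h.congr'
    filter_upwards [eventually_ge_atTop (0:ℝ)] with t ht
    show Real.sqrt ((Ab t) ^ 2 / (A t) ^ 2) = Ab t / A t
    rw [← div_pow, Real.sqrt_sq (div_nonneg (hAbpos t ht).le (hApos t ht).le)]
  have hAoverAb : Tendsto (fun t => A t / Ab t) atTop (nhds r⁻¹) := by
    have h := hr.inv₀ hrpos.ne'
    simpa [inv_div] using h
  have hBbB : Tendsto (fun t => Bb t / B t) atTop (nhds r) := by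
    have h : Tendsto (fun t => (m1 * m2 / (l1 * l2)) * (A t / Ab t)) atTop
        (nhds ((m1 * m2 / (l1 * l2)) * r⁻¹)) := tendsto_const_nhds.mul hAoverAb
    have e : (m1 * m2 / (l1 * l2)) * r⁻¹ = r := by
      rw [← hr2]
      field_simp [hrpos.ne']
    rw [e] at h
    apply h.congr'
    filter_upwards [eventually_ge_atTop (0:ℝ)] with t ht
    rw [hBeq t ht, hBbeq t ht]
    have h1 : A t ≠ 0 := (hApos t ht).ne'
    have h2 : Ab t ≠ 0 := (hAbpos t ht).ne'
    field_simp
  have hDbD : Tendsto (fun t => Db t / D t) atTop (nhds 1) := by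
    have h := hDb3.div hD3 (by norm_num : (3:ℝ) ≠ 0)
    norm_num at h
    apply h.congr'
    filter_upwards [eventually_ge_atTop (1:ℝ)] with t ht
    have htne : t ≠ 0 := (lt_of_lt_of_le one_pos ht).ne'
    show Db t / t / (D t / t) = Db t / D t
    rw [div_div_div_comm, div_self htne, div_one]
  -- A / D → 0
  have hloglim : Tendsto (fun t => Real.log t / t) atTop (nhds 0) :=
    Real.isLittleO_log_id_atTop.tendsto_div_nhds_zero
  have hAD : Tendsto (fun t => A t / D t) atTop (nhds 0) := by
    have h : Tendsto (fun t => ((A t) ^ 2 / Real.log t) * (Real.log t / t) * (t / D t) * (A t)⁻¹)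
        atTop (nhds (2 * l1 * l2 * 3⁻¹ * 0 * 3⁻¹ * 0)) :=
      ((hA2log.mul hloglim).mul htD).mul hinvA
    rw [show (2 * l1 * l2 * 3⁻¹ * 0 * 3⁻¹ * 0 : ℝ) = 0 by ring] at h
    apply h.congr'
    filter_upwards [eventually_ge_atTop (2:ℝ), hlogpos] with t ht hlt
    have ht0 : t ∈ Set.Ici (0:ℝ) := by simp; linarith
    have htne : t ≠ 0 := by positivity
    have hAne : A t ≠ 0 := (hApos t ht0).ne'
    have hDne : D t ≠ 0 := (hDpos t ht0).ne'
    field_simp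
  have hAbD : Tendsto (fun t => Ab t / D t) atTop (nhds 0) := by
    have h : Tendsto (fun t => (Ab t / A t) * (A t / D t)) atTop (nhds (r * 0)) := hr.mul hAD
    rw [mul_zero] at h
    apply h.congr'
    filter_upwards [eventually_ge_atTop (0:ℝ)] with t ht
    have hAne : A t ≠ 0 := (hApos t ht).ne'
    field_simp
  have hCbD : Tendsto (fun t => Cb t / D t) atTop (nhds 0) := by
    have h : Tendsto (fun t => m3 * (D t)⁻¹) atTop (nhds (m3 * 0)) :=
      tendsto_const_nhds.mul hinvD
    rw [mul_zero] at h
    apply h.congr'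
    filter_upwards [eventually_ge_atTop (0:ℝ)] with t ht
    rw [hCbconst t ht, div_eq_mul_inv]
  -- the eight terms
  have h1 : Tendsto (fun t => ((A t - Ab t - a ^ 2 * Bb t) / A t) ^ 2) atTop
      (nhds ((1 - r) ^ 2)) := by
    have hb : Tendsto (fun t => (1 - Ab t / A t - a ^ 2 * (Bb t / A t)) ^ 2) atTop
        (nhds ((1 - r - a ^ 2 * 0) ^ 2)) :=
      ((tendsto_const_nhds.sub hr).sub (tendsto_const_nhds.mul hBbA)).pow 2
    rw [show (1 - r - a ^ 2 * 0 : ℝ) = 1 - r by ring] at hb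
    apply hb.congr'
    filter_upwards [eventually_ge_atTop (0:ℝ)] with t ht
    have hAne : A t ≠ 0 := (hApos t ht).ne'
    congr 1
    field_simp
  have h2 : Tendsto (fun t => ((B t - Bb t) / B t) ^ 2) atTop (nhds ((1 - r) ^ 2)) := by
    have hb : Tendsto (fun t => (1 - Bb t / B t) ^ 2) atTop (nhds ((1 - r) ^ 2)) :=
      (tendsto_const_nhds.sub hBbB).pow 2
    apply hb.congr'
    filter_upwards [eventually_ge_atTop (0:ℝ)] with t ht
    have hBne : B t ≠ 0 := (hBpos t ht).ne'
    congr 1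
    field_simp
  have h3 : Tendsto (fun t => ((C t - Cb t) / C t) ^ 2) atTop
      (nhds (((l3 - m3) / l3) ^ 2)) := by
    apply tendsto_const_nhds.congr'
    filter_upwards [eventually_ge_atTop (0:ℝ)] with t ht
    rw [hCconst t ht, hCbconst t ht]
  have h4 : Tendsto (fun t =>
      ((b ^ 2 * Ab t + c ^ 2 * Bb t + d ^ 2 * Cb t + Db t - D t) / D t) ^ 2) atTop
      (nhds 0) := by
    have hb : Tendsto (fun t => (b ^ 2 * (Ab t / D t) + c ^ 2 * (Bb t / D t)
        + d ^ 2 * (Cb t / D t) + Db t / D t - 1) ^ 2) atTop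
        (nhds ((b ^ 2 * 0 + c ^ 2 * 0 + d ^ 2 * 0 + 1 - 1) ^ 2)) :=
      ((((((tendsto_const_nhds.mul hAbD).add (tendsto_const_nhds.mul hBbD)).add
        (tendsto_const_nhds.mul hCbD)).add hDbD).sub tendsto_const_nhds)).pow 2
    rw [show ((b ^ 2 * 0 + c ^ 2 * 0 + d ^ 2 * 0 + 1 - 1 : ℝ)) ^ 2 = 0 by ring] at hb
    apply hb.congr'
    filter_upwards [eventually_ge_atTop (0:ℝ)] with t ht
    have hDne : D t ≠ 0 := (hDpos t ht).ne'
    congr 1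
    field_simp
  have h5 : Tendsto (fun t => 2 * (a * Bb t) ^ 2 / (A t * B t)) atTop (nhds 0) := by
    have hb : Tendsto (fun t => 2 * (a * Bb t) ^ 2 / (l1 * l2)) atTop
        (nhds (2 * (a * 0) ^ 2 / (l1 * l2))) :=
      (tendsto_const_nhds.mul ((tendsto_const_nhds.mul hBblim).pow 2)).div_const (l1 * l2)
    rw [show (2 * (a * 0) ^ 2 / (l1 * l2) : ℝ) = 0 by simp] at hb
    apply hb.congr'
    filter_upwards [eventually_ge_atTop (0:ℝ)] with t ht
    rw [hconsAB t ht]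
  have h6 : Tendsto (fun t => 2 * (b * Ab t + a * c * Bb t) ^ 2 / (A t * D t)) atTop
      (nhds 0) := by
    have hb : Tendsto (fun t => 2 * ((b * (Ab t / A t) + a * c * (Bb t / A t)) ^ 2
        * (A t / D t))) atTop (nhds (2 * ((b * r + a * c * 0) ^ 2 * 0))) :=
      tendsto_const_nhds.mul ((((tendsto_const_nhds.mul hr).add
        (tendsto_const_nhds.mul hBbA)).pow 2).mul hAD)
    rw [show (2 * ((b * r + a * c * 0) ^ 2 * 0) : ℝ) = 0 by ring] at hb
    apply hb.congr'
    filter_upwards [eventually_ge_atTop (0:ℝ)] with t ht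
    have hAne : A t ≠ 0 := (hApos t ht).ne'
    have hDne : D t ≠ 0 := (hDpos t ht).ne'
    field_simp
  have h7 : Tendsto (fun t => 2 * (c * Bb t) ^ 2 / (B t * D t)) atTop (nhds 0) := by
    have hb : Tendsto (fun t => 2 * ((c * (Bb t / B t)) ^ 2 * (B t / D t))) atTop
        (nhds (2 * ((c * r) ^ 2 * 0))) :=
      tendsto_const_nhds.mul (((tendsto_const_nhds.mul hBbB).pow 2).mul hBD)
    rw [show (2 * ((c * r) ^ 2 * 0) : ℝ) = 0 by ring] at hb
    apply hb.congr'
    filter_upwards [eventually_ge_atTop (0:ℝ)] with t ht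
    have hBne : B t ≠ 0 := (hBpos t ht).ne'
    have hDne : D t ≠ 0 := (hDpos t ht).ne'
    field_simp
  have h8 : Tendsto (fun t => 2 * (d * Cb t) ^ 2 / (C t * D t)) atTop (nhds 0) := by
    have hb : Tendsto (fun t => (2 * (d * m3) ^ 2 / l3) * (D t)⁻¹) atTop
        (nhds ((2 * (d * m3) ^ 2 / l3) * 0)) := tendsto_const_nhds.mul hinvD
    rw [mul_zero] at hb
    apply hb.congr'
    filter_upwards [eventually_ge_atTop (0:ℝ)] with t ht
    have hDne : D t ≠ 0 := (hDpos t ht).ne'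
    rw [hCconst t ht, hCbconst t ht]
    field_simp
  have hS : Tendsto (fun t : ℝ =>
        ((A t - Ab t - a ^ 2 * Bb t) / A t) ^ 2 +
        ((B t - Bb t) / B t) ^ 2 +
        ((C t - Cb t) / C t) ^ 2 +
        ((b ^ 2 * Ab t + c ^ 2 * Bb t + d ^ 2 * Cb t + Db t - D t) / D t) ^ 2 +
        2 * (a * Bb t) ^ 2 / (A t * B t) +
        2 * (b * Ab t + a * c * Bb t) ^ 2 / (A t * D t) +
        2 * (c * Bb t) ^ 2 / (B t * D t) +
        2 * (d * Cb t) ^ 2 / (C t * D t))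
      atTop (nhds ((1 - r) ^ 2 + (1 - r) ^ 2 + ((l3 - m3) / l3) ^ 2 + 0 + 0 + 0 + 0 + 0)) :=
    ((((((h1.add h2).add h3).add h4).add h5).add h6).add h7).add h8
  rw [show ((1 - r) ^ 2 + (1 - r) ^ 2 + ((l3 - m3) / l3) ^ 2 + 0 + 0 + 0 + 0 + 0 : ℝ)
    = 2 * (1 - r) ^ 2 + ((l3 - m3) / l3) ^ 2 by ring] at hS
  constructor
  · intro h
    have hSeq : 2 * (1 - r) ^ 2 + ((l3 - m3) / l3) ^ 2 = 0 := tendsto_nhds_unique hS h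
    have e1 : (1 - r) ^ 2 = 0 := by nlinarith [sq_nonneg (1 - r), sq_nonneg ((l3 - m3) / l3)]
    have e2 : ((l3 - m3) / l3) ^ 2 = 0 := by nlinarith [sq_nonneg (1 - r)]
    have hr1 : r = 1 := by nlinarith [sq_nonneg (1 - r)]
    constructor
    · have : (1:ℝ) = m1 * m2 / (l1 * l2) := by rw [← hr2, hr1]; norm_num
      rw [eq_div_iff (by positivity : (l1 * l2 : ℝ) ≠ 0)] at this
      linarith
    · have : (l3 - m3) / l3 = 0 := by
        have := sq_eq_zero_iff.1 e2
        exact this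
      rw [div_eq_zero_iff] at this
      rcases this with h' | h'
      · linarith
      · exact absurd h' hl3.ne'
  · rintro ⟨hm, hm3⟩
    have hr1 : r = 1 := by
      rw [hrdef, hm, div_self (by positivity : (l1 * l2 : ℝ) ≠ 0), Real.sqrt_one]
    rw [show (0:ℝ) = 2 * (1 - r) ^ 2 + ((l3 - m3) / l3) ^ 2 by rw [hr1, hm3]; ring]
    exact hS
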